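/- For every U ∈ Σ*, overline(Γd(U)) = Γd(overline(U)), i.e., the complement of the image of U under Γd equals the image under Γd of the complement of U. -/

import Mathlib

namespace CInfWords

open scoped Classical

/-- Run-length encoding Δ of a word. -/
def rle : List ℕ → List ℕ
  | [] => []
  | [_] => [1]
  | a :: b :: l =>
    if a = b then
      match rle (b :: l) with
      | [] => [1]
      | c :: r => (c + 1) :: r
    else 1 :: rle (b :: l)

/-- Erase a leading `1`, if any. -/
def trim1 : List ℕ → List ℕ
  | 1 :: l => l
  | l => l

/-- The derivative `D`: the run-length encoding with the first and/or the last
symbol erased when they are equal to `1`. -/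
def D (w : List ℕ) : List ℕ := trim1 ((trim1 (rle w).reverse).reverse)

/-- Words over Σ = {1,2}. -/
def IsWord (w : List ℕ) : Prop := ∀ x ∈ w, x = 1 ∨ x = 2

/-- Words over Σ₀ = {0,1,2}. -/
def IsWord0 (w : List ℕ) : Prop := ∀ x ∈ w, x = 0 ∨ x = 1 ∨ x = 2

/-- Σ₀^{++}: words over Σ₀ that are empty or begin with a nonzero symbol. -/
def Spp (w : List ℕ) : Prop := IsWord0 w ∧ (w = [] ∨ w.headI ≠ 0)

/-- C^∞-words: every iterated derivative is a word over Σ = {1,2}. -/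
def Cinf (w : List ℕ) : Prop := ∀ k, IsWord (D^[k] w)

/-- The height of a C^∞-word: the least k with D^[k] w = ε. -/
noncomputable def height (w : List ℕ) : ℕ := sInf {k | D^[k] w = []}

/-- The root of a C^∞-word of height k > 0: its (k-1)-st derivative. -/
noncomputable def root (w : List ℕ) : List ℕ := D^[height w - 1] w

/-- `v` is a primitive of `w`. -/
def Primitive (v w : List ℕ) : Prop := IsWord v ∧ D v = w

/-- The complement: swap 1's and 2's. -/
def compl (w : List ℕ) : List ℕ := w.map (fun x => 3 - x)

/-- Minimal C^∞-words: every derivative is a shortest primitive of the next one. -/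
def Minimal (w : List ℕ) : Prop :=
  Cinf w ∧ 0 < height w ∧
    ∀ j, j + 2 ≤ height w → ∀ v, Primitive v (D^[j+1] w) → (D^[j] w).length ≤ v.length

/-- Maximal C^∞-words: every derivative is a longest primitive of the next one. -/
def Maximal (w : List ℕ) : Prop :=
  Cinf w ∧ 0 < height w ∧
    ∀ j, j + 2 ≤ height w → ∀ v, Primitive v (D^[j+1] w) → v.length ≤ (D^[j] w).length

def LeftMinimal (w : List ℕ) : Prop := ∃ v, Minimal v ∧ w <+: v
def RightMinimal (w : List ℕ) : Prop := ∃ v, Minimal v ∧ w <:+ v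
def LeftMaximal (w : List ℕ) : Prop := ∃ v, Maximal v ∧ w <+: v
def RightMaximal (w : List ℕ) : Prop := ∃ v, Maximal v ∧ w <:+ v

/-- Single-rooted minimal words. -/
def SRMin (w : List ℕ) : Prop := Minimal w ∧ (root w).length = 1

/-- Double-rooted minimal words. -/
def DRMin (w : List ℕ) : Prop := Minimal w ∧ (root w).length = 2

/-- The left frontier Ψ(w). -/
noncomputable def psi (w : List ℕ) : List ℕ :=
  (List.range (height w)).map fun i =>
    if i = 0 then w.getD 0 0
    else if (D^[i] w).getD 0 0 = 2 ∧ (D^[i-1] w).getD 0 0 ≠ (D^[i-1] w).getD 1 0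
      then 0
    else (D^[i] w).getD 0 0

/-- The single-rooted minimal word with left frontier U (if it exists). -/
noncomputable def srmOf (U : List ℕ) : List ℕ :=
  if h : ∃ w, SRMin w ∧ psi w = U then h.choose else []

/-- The double-rooted minimal word with left frontier U (if it exists). -/
noncomputable def drmOf (U : List ℕ) : List ℕ :=
  if h : ∃ w, DRMin w ∧ psi w = U then h.choose else []

/-- Γs: the right frontier of the single-rooted minimal word with left frontier U. -/
noncomputable def Gs (U : List ℕ) : List ℕ := psi (srmOf U).reverse

/-- Γd: the right frontier of the double-rooted minimal word with left frontier U. -/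
noncomputable def Gd (U : List ℕ) : List ℕ := psi (drmOf U).reverse

/-- Θ = Γs ∘ Γd. -/
noncomputable def Th (U : List ℕ) : List ℕ := Gs (Gd U)

/-- Π = Γd ∘ Γs. -/
noncomputable def Pp (U : List ℕ) : List ℕ := Gd (Gs U)

/-- One step in the graph G: from node U, the edge labeled 1 goes to U·1, the edge
labeled 2 goes to U·2, and the edge labeled 0 goes to Θ(U)·2. -/
noncomputable def step (U : List ℕ) (a : ℕ) : List ℕ :=
  if a = 1 then U ++ [1] else if a = 2 then U ++ [2] else Th U ++ [2]

/-- The endpoint of the path in G starting at the origin ε and labeled by W. -/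
noncomputable def pathEnd (W : List ℕ) : List ℕ := W.foldl step []

/-- W ∈ Σ₀^{++} labels a directed path in G from ε to U. -/
def LabelsPath (W U : List ℕ) : Prop := Spp W ∧ pathEnd W = U

/-- ‖U‖: the number of words in Σ₀^{++} labeling a path in G from ε to U. -/
noncomputable def normG (U : List ℕ) : ℕ := {W | LabelsPath W U}.ncard

/-- |U|: the length of the single-rooted minimal word with left frontier U. -/
noncomputable def len (U : List ℕ) : ℕ := (srmOf U).length

/-- u is the minimal part of w: the first (leftmost-occurring) factor of w that
is a single-rooted minimal word of the same height as w. -/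
def IsMinPart (u w : List ℕ) : Prop :=
  ∃ s t, w = s ++ u ++ t ∧ SRMin u ∧ height u = height w ∧
    ∀ u' s' t', w = s' ++ u' ++ t' → SRMin u' → height u' = height w →
      s.length ≤ s'.length

/-! ### Auxiliary development for Statement 11 -/

/-- Letters of Σ. -/
def Sig (a : ℕ) : Prop := a = 1 ∨ a = 2

lemma Sig.flip {a : ℕ} (h : Sig a) : Sig (3 - a) := by
  rcases h with rfl | rfl
  · exact Or.inr rfl
  · exact Or.inl rfl

lemma Sig.flip_flip {a : ℕ} (h : Sig a) : 3 - (3 - a) = a := by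
  rcases h with rfl | rfl <;> rfl

lemma Sig.ne_flip {a : ℕ} (h : Sig a) : a ≠ 3 - a := by
  rcases h with rfl | rfl <;> decide

lemma Sig.eq_flip_of_ne {a b : ℕ} (ha : Sig a) (hb : Sig b) (h : b ≠ a) : b = 3 - a := by
  rcases ha with rfl | rfl <;> rcases hb with rfl | rfl <;> simp_all

/-- The word with run lengths `X`, alternating letters starting with `a`. -/
def cAlt : ℕ → List ℕ → List ℕ
  | _, [] => []
  | a, n :: X => List.replicate n a ++ cAlt (3 - a) X

/-- Pad a run-length sequence with forced boundary 1's. -/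
def cPad (u : List ℕ) : List ℕ :=
  (if u.headI = 1 then [1] else []) ++ u ++ (if u.getLastD 0 = 1 then [1] else [])

/-- The minimal word with left frontier `V` (double-rooted). -/
def cBuild : List ℕ → List ℕ
  | [] => []
  | [a] => [a, 3 - a]
  | a :: b :: V => cAlt a (cPad (cBuild (b :: V)))

@[simp] lemma cAlt_nil (a : ℕ) : cAlt a [] = [] := rfl

lemma cAlt_cons (a n : ℕ) (X : List ℕ) :
    cAlt a (n :: X) = List.replicate n a ++ cAlt (3 - a) X := rfl

/-- Letter after consuming runs `X` starting from `a`. -/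
def nl (a : ℕ) (X : List ℕ) : ℕ := if X.length % 2 = 0 then a else 3 - a

lemma Sig.nl {a : ℕ} (ha : Sig a) (X : List ℕ) : Sig (CInfWords.nl a X) := by
  unfold CInfWords.nl; split
  · exact ha
  · exact ha.flip

lemma nl_cons {a n : ℕ} {X : List ℕ} (ha : Sig a) :
    nl a (n :: X) = nl (3 - a) X := by
  unfold nl
  rcases Nat.even_or_odd X.length with h | h
  · have h0 : X.length % 2 = 0 := Nat.even_iff.mp h
    have h1 : (n :: X).length % 2 = 1 := by
      simp [List.length_cons, Nat.succ_mod_two_eq_one_iff, h0]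
    rw [List.length_cons] at h1
    simp [h0, h1]
  · have h0 : X.length % 2 = 1 := Nat.odd_iff.mp h
    have h1 : (n :: X).length % 2 = 0 := by
      simp [List.length_cons, Nat.succ_mod_two_eq_zero_iff, h0]
    rw [List.length_cons] at h1
    simp [h0, h1, ha.flip_flip]

lemma cAlt_append {a : ℕ} (ha : Sig a) : ∀ (X Y : List ℕ),
    cAlt a (X ++ Y) = cAlt a X ++ cAlt (nl a X) Y := by
  intro X
  induction X generalizing a with
  | nil => intro Y; simp [nl]
  | cons n X ih =>
    intro Y
    rw [List.cons_append, cAlt_cons, ih ha.flip, cAlt_cons, nl_cons ha,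
      List.append_assoc]

lemma length_cAlt (a : ℕ) : ∀ X : List ℕ, (cAlt a X).length = X.sum := by
  intro X
  induction X generalizing a with
  | nil => rfl
  | cons n X ih => simp [cAlt_cons, ih]

lemma isWord_cAlt {a : ℕ} (ha : Sig a) : ∀ X : List ℕ, IsWord (cAlt a X) := by
  intro X
  induction X generalizing a with
  | nil => intro x hx; simp at hx
  | cons n X ih =>
    intro x hx
    rw [cAlt_cons, List.mem_append] at hx
    rcases hx with hx | hx
    · rcases List.eq_of_mem_replicate hx with rfl
      exact ha
    · exact ih ha.flip x hx

lemma cAlt_ne_nil {a n : ℕ} (hn : 0 < n) (X : List ℕ) : cAlt a (n :: X) ≠ [] := by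
  rw [cAlt_cons]
  intro h
  rw [List.append_eq_nil_iff] at h
  have : n = 0 := by simpa using h.1
  omega

lemma headI_cAlt {a n : ℕ} (hn : 0 < n) (X : List ℕ) : (cAlt a (n :: X)).headI = a := by
  rw [cAlt_cons]
  obtain ⟨m, rfl⟩ := Nat.exists_eq_succ_of_ne_zero hn.ne'
  rfl
/-! ### rle lemmas -/

@[simp] lemma rle_nil : rle [] = [] := rfl
@[simp] lemma rle_singleton (a : ℕ) : rle [a] = [1] := rfl

lemma rle_cons_ne {a b : ℕ} (h : a ≠ b) (l : List ℕ) :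
    rle (a :: b :: l) = 1 :: rle (b :: l) := by
  rw [rle, if_neg h]

lemma rle_cons_cons_structure (b : ℕ) (l : List ℕ) : ∃ c r, rle (b :: l) = c :: r := by
  induction l generalizing b with
  | nil => exact ⟨1, [], rfl⟩
  | cons x l ih =>
    by_cases h : b = x
    · subst h
      obtain ⟨c, r, hcr⟩ := ih b
      refine ⟨c + 1, r, ?_⟩
      rw [rle, if_pos rfl, hcr]
    · exact ⟨1, rle (x :: l), rle_cons_ne h l⟩

lemma rle_cons_eq {a : ℕ} {l : List ℕ} {c : ℕ} {r : List ℕ} (h : rle (a :: l) = c :: r) :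
    rle (a :: a :: l) = (c + 1) :: r := by
  rw [rle, if_pos rfl, h]

lemma sum_rle : ∀ w : List ℕ, (rle w).sum = w.length := by
  intro w
  induction w with
  | nil => rfl
  | cons a t ih =>
    cases t with
    | nil => rfl
    | cons b l =>
      by_cases h : a = b
      · subst h
        obtain ⟨c, r, hcr⟩ := rle_cons_cons_structure a l
        rw [rle_cons_eq hcr]
        rw [hcr] at ih
        simp only [List.sum_cons] at ih ⊢
        simp [List.length_cons] at ih ⊢
        omega
      · rw [rle_cons_ne h]
        simp only [List.sum_cons, ih, List.length_cons]
        omega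

/-- A word over Σ is reconstructed from its head and run-length encoding. -/
lemma word_eq_cAlt : ∀ w : List ℕ, IsWord w → cAlt w.headI (rle w) = w := by
  intro w
  induction w with
  | nil => intro _; rfl
  | cons a t ih =>
    intro hw
    have ha : Sig a := hw a (List.mem_cons_self)
    have ht : IsWord t := fun x hx => hw x (List.mem_cons_of_mem _ hx)
    cases t with
    | nil => rcases ha with rfl | rfl <;> rfl
    | cons b l =>
      have hb : Sig b := ht b (List.mem_cons_self)
      by_cases h : a = b
      · subst h
        obtain ⟨c, r, hcr⟩ := rle_cons_cons_structure a l
        rw [rle_cons_eq hcr, cAlt_cons]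
        simp only [List.headI_cons]
        have ihv := ih ht
        rw [hcr] at ihv
        simp only [List.headI] at ihv
        rw [cAlt_cons] at ihv
        have : List.replicate (c + 1) a ++ cAlt (3 - a) r
            = a :: (List.replicate c a ++ cAlt (3 - a) r) := by
          rw [List.replicate_succ, List.cons_append]
        rw [this, ihv]
      · have hb' : b = 3 - a := Sig.eq_flip_of_ne ha hb (fun hh => h hh.symm)
        rw [rle_cons_ne h, cAlt_cons]
        have ihv := ih ht
        simp only [List.headI] at ihv
        rw [hb'] at ihv ⊢
        simp only [List.headI_cons, List.replicate_one, List.singleton_append, ihv]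
/-! ### rle of alternating words; trim lemmas -/

lemma rle_replicate_append {a : ℕ} :
    ∀ (n : ℕ), 0 < n → ∀ (l : List ℕ), (l = [] ∨ l.headI ≠ a) →
      rle (List.replicate n a ++ l) = n :: rle l := by
  intro n hn
  induction n with
  | zero => omega
  | succ m ih =>
    intro l hl
    cases Nat.eq_zero_or_pos m with
    | inl hm =>
      subst hm
      simp only [List.replicate_succ, List.replicate_zero, List.cons_append, List.nil_append]
      rcases hl with rfl | hl
      · rfl
      · cases l with
        | nil => rfl
        | cons x t =>
          simp only [List.headI_cons] at hl
          rw [rle_cons_ne (fun h => hl h.symm)]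
    | inr hm =>
      have hrec := ih hm l hl
      have hrepl : List.replicate (m + 1) a ++ l = a :: (List.replicate m a ++ l) := by
        rw [List.replicate_succ, List.cons_append]
      obtain ⟨k, hk⟩ := Nat.exists_eq_succ_of_ne_zero hm.ne'
      have hstruct : ∃ t, List.replicate m a ++ l = a :: t := by
        rw [hk, List.replicate_succ, List.cons_append]
        exact ⟨_, rfl⟩
      obtain ⟨t, ht⟩ := hstruct
      rw [hrepl, ht]
      rw [ht] at hrec
      rw [rle_cons_eq hrec]

lemma rle_cAlt {a : ℕ} (ha : Sig a) :
    ∀ X : List ℕ, (∀ n ∈ X, 0 < n) → rle (cAlt a X) = X := by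
  intro X
  induction X generalizing a with
  | nil => intro _; rfl
  | cons n X ih =>
    intro hX
    have hn : 0 < n := hX n (List.mem_cons_self)
    have hX' : ∀ m ∈ X, 0 < m := fun m hm => hX m (List.mem_cons_of_mem _ hm)
    rw [cAlt_cons, rle_replicate_append n hn _ ?_, ih ha.flip hX']
    cases X with
    | nil => exact Or.inl rfl
    | cons m X' =>
      right
      rw [headI_cAlt (hX' m (List.mem_cons_self))]
      exact (ha.ne_flip ∘ Eq.symm)

/-! ### trim1 lemmas -/

@[simp] lemma trim1_nil : trim1 [] = [] := rfl
@[simp] lemma trim1_cons_one (l : List ℕ) : trim1 (1 :: l) = l := rfl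

lemma trim1_cons_ne {n : ℕ} (h : n ≠ 1) (l : List ℕ) : trim1 (n :: l) = n :: l := by
  match n with
  | 0 => rfl
  | 1 => exact absurd rfl h
  | (k+2) => rfl

lemma trim1_cases {Y u : List ℕ} (h : trim1 Y = u) :
    Y = 1 :: u ∨ (Y = u ∧ Y.headI ≠ 1) := by
  cases Y with
  | nil =>
    right
    simp only [trim1_nil] at h
    exact ⟨h, by decide⟩
  | cons y Y' =>
    by_cases hy : y = 1
    · subst hy
      rw [trim1_cons_one] at h
      exact Or.inl (by rw [h])
    · rw [trim1_cons_ne hy] at h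
      exact Or.inr ⟨h, by simpa using hy⟩

lemma headI_reverse : ∀ l : List ℕ, l.reverse.headI = l.getLastD 0 := by
  intro l
  induction l using List.reverseRecOn with
  | nil => rfl
  | append_singleton s b _ =>
    rw [List.reverse_append]
    simp [List.getLastD_concat]

lemma getLastD_reverse (l : List ℕ) : l.reverse.getLastD 0 = l.headI := by
  have := headI_reverse l.reverse
  rw [List.reverse_reverse] at this
  exact this.symm

lemma trim1_of_headI_ne {l : List ℕ} (h : l.headI ≠ 1) : trim1 l = l := by
  cases l with
  | nil => rfl
  | cons x t => exact trim1_cons_ne (by simpa using h) t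

lemma headI_append_left {l l' : List ℕ} (h : l ≠ []) : (l ++ l').headI = l.headI := by
  cases l with
  | nil => exact absurd rfl h
  | cons x t => rfl

/-- the two-sided trim used in `D` -/
lemma D_eq_trim (w : List ℕ) : D w = trim1 ((trim1 (rle w).reverse).reverse) := rfl

lemma trim2_pad {u : List ℕ} (hu : u ≠ []) :
    trim1 ((trim1 (cPad u).reverse).reverse) = u := by
  have hstep1 : (trim1 (cPad u).reverse).reverse
      = (if u.headI = 1 then [1] else []) ++ u := by
    unfold cPad
    by_cases hd : u.getLastD 0 = 1
    · rw [if_pos hd]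
      have h1 : ((if u.headI = 1 then ([1] : List ℕ) else []) ++ u ++ [1]).reverse
          = 1 :: ((if u.headI = 1 then ([1] : List ℕ) else []) ++ u).reverse := by
        simp [List.reverse_append]
      rw [h1, trim1_cons_one, List.reverse_reverse]
    · rw [if_neg hd, List.append_nil]
      have hrev : ((if u.headI = 1 then [1] else []) ++ u).reverse
          = u.reverse ++ (if u.headI = 1 then [1] else []).reverse := by
        rw [List.reverse_append]
      rw [hrev, trim1_of_headI_ne, ← hrev, List.reverse_reverse]
      rw [headI_append_left (by simpa using hu), headI_reverse]
      exact hd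
  rw [hstep1]
  by_cases hh : u.headI = 1
  · rw [if_pos hh, List.singleton_append, trim1_cons_one]
  · rw [if_neg hh, List.nil_append]
    exact trim1_of_headI_ne hh
/-! ### cPad facts and the derivative of built words -/

lemma isWord_cPad {u : List ℕ} (hu : IsWord u) : ∀ n ∈ cPad u, Sig n := by
  intro n hn
  unfold cPad at hn
  rw [List.mem_append, List.mem_append] at hn
  rcases hn with (hn | hn) | hn
  · split at hn <;> simp_all [Sig]
  · exact hu n hn
  · split at hn <;> simp_all [Sig]

lemma cPad_pos {u : List ℕ} (hu : IsWord u) : ∀ n ∈ cPad u, 0 < n := by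
  intro n hn
  rcases isWord_cPad hu n hn with rfl | rfl <;> omega

lemma cPad_ne_nil {u : List ℕ} (hu : u ≠ []) : cPad u ≠ [] := by
  unfold cPad
  simp [hu]

lemma headI_cPad {u : List ℕ} (hu : u ≠ []) : (cPad u).headI = u.headI := by
  unfold cPad
  by_cases hh : u.headI = 1
  · rw [if_pos hh]
    simp [hh]
  · rw [if_neg hh, List.nil_append, headI_append_left hu]

lemma getLastD_indep {u : List ℕ} (hu : u ≠ []) (d d' : ℕ) :
    u.getLastD d = u.getLastD d' := by
  rcases List.eq_nil_or_concat u with rfl | ⟨s, b, rfl⟩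
  · exact absurd rfl hu
  · rw [List.concat_eq_append, List.getLastD_concat, List.getLastD_concat]

lemma sum_cPad (u : List ℕ) :
    (cPad u).sum = (if u.headI = 1 then 1 else 0) + u.sum
      + (if u.getLastD 0 = 1 then 1 else 0) := by
  unfold cPad
  split_ifs <;> simp <;> omega

lemma D_cAlt_cPad {a : ℕ} {u : List ℕ} (ha : Sig a) (hu : u ≠ []) (hw : IsWord u) :
    D (cAlt a (cPad u)) = u := by
  rw [D_eq_trim, rle_cAlt ha _ (cPad_pos hw), trim2_pad hu]

/-- Characterization of run-length encodings of primitives. -/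
lemma rle_of_D {v u : List ℕ} (hu : u ≠ []) (hD : D v = u) :
    (cPad u).sum ≤ (rle v).sum ∧ ((rle v).sum ≤ (cPad u).sum → rle v = cPad u) := by
  rw [D_eq_trim] at hD
  set Z := rle v with hZdef
  clear_value Z
  have hinner0 : trim1 Z.reverse = ((trim1 Z.reverse).reverse).reverse :=
    (List.reverse_reverse _).symm
  rcases trim1_cases hD with hY | ⟨hY, hY1⟩
  · -- after left trim we had 1 :: u
    have hin : trim1 Z.reverse = (1 :: u).reverse := by rw [hinner0, hY]
    rcases trim1_cases hin with hZ2 | ⟨hZ2, hZ1⟩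
    · -- Z = (1 :: u) ++ [1]
      have hZv : Z = (1 :: u) ++ [1] := by
        rw [← List.reverse_reverse Z, hZ2]; simp
      have hsum : Z.sum = 1 + u.sum + 1 := by
        rw [hZv]; simp only [List.sum_append, List.sum_cons, List.sum_nil]; omega
      constructor
      · rw [sum_cPad, hsum]; split <;> split <;> omega
      · intro hle
        rw [sum_cPad, hsum] at hle
        by_cases h1 : u.headI = 1
        · by_cases h2 : u.getLastD 0 = 1
          · rw [hZv]; unfold cPad; rw [if_pos h1, if_pos h2]; simp
          · rw [if_pos h1, if_neg h2] at hle; omega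
        · rw [if_neg h1] at hle; split at hle <;> omega
    · -- Z = 1 :: u, last of Z not 1
      have hZv : Z = 1 :: u := by
        rw [← List.reverse_reverse Z, hZ2, List.reverse_reverse]
      have hlast : u.getLastD 0 ≠ 1 := by
        have h := hZ1
        rw [headI_reverse, hZv, List.getLastD_cons, getLastD_indep hu 1 0] at h
        exact h
      have hsum : Z.sum = 1 + u.sum := by
        rw [hZv]; simp only [List.sum_cons]
      constructor
      · rw [sum_cPad, hsum, if_neg hlast]; split <;> omega
      · intro hle
        rw [sum_cPad, hsum, if_neg hlast] at hle
        by_cases h1 : u.headI = 1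
        · rw [hZv]; unfold cPad; rw [if_pos h1, if_neg hlast]; simp
        · rw [if_neg h1] at hle; omega
  · -- after left trim we had u itself, with u.headI ≠ 1
    have hhead : u.headI ≠ 1 := by rwa [hY] at hY1
    have hin : trim1 Z.reverse = u.reverse := by rw [hinner0, hY]
    rcases trim1_cases hin with hZ2 | ⟨hZ2, hZ1⟩
    · -- Z = u ++ [1]
      have hZv : Z = u ++ [1] := by
        rw [← List.reverse_reverse Z, hZ2]; simp
      have hsum : Z.sum = u.sum + 1 := by
        rw [hZv]; simp only [List.sum_append, List.sum_cons, List.sum_nil]; omega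
      constructor
      · rw [sum_cPad, hsum, if_neg hhead]; split <;> omega
      · intro hle
        rw [sum_cPad, hsum, if_neg hhead] at hle
        by_cases h2 : u.getLastD 0 = 1
        · rw [hZv]; unfold cPad; rw [if_neg hhead, if_pos h2]; simp
        · rw [if_neg h2] at hle; omega
    · -- Z = u, last of Z not 1
      have hZv : Z = u := by
        rw [← List.reverse_reverse Z, hZ2, List.reverse_reverse]
      have hlast : u.getLastD 0 ≠ 1 := by
        have h := hZ1
        rw [headI_reverse, hZv] at h
        exact h
      constructor
      · rw [sum_cPad, hZv, if_neg hhead, if_neg hlast]; omega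
      · intro _
        rw [hZv]; unfold cPad; rw [if_neg hhead, if_neg hlast]; simp
/-! ### cBuild basics -/

@[simp] lemma cBuild_nil : cBuild [] = [] := rfl
lemma cBuild_single (a : ℕ) : cBuild [a] = [a, 3 - a] := rfl
lemma cBuild_cons2 (a b : ℕ) (V : List ℕ) :
    cBuild (a :: b :: V) = cAlt a (cPad (cBuild (b :: V))) := rfl

lemma isWord_tail {a : ℕ} {V : List ℕ} (h : IsWord (a :: V)) : IsWord V :=
  fun x hx => h x (List.mem_cons_of_mem _ hx)

lemma isWord_head {a : ℕ} {V : List ℕ} (h : IsWord (a :: V)) : Sig a :=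
  h a (List.mem_cons_self)

lemma isWord_cBuild : ∀ (V : List ℕ), IsWord V → IsWord (cBuild V)
  | [], _ => fun x hx => by simp at hx
  | [a], hV => by
    intro x hx
    rw [cBuild_single] at hx
    rcases hx with _ | ⟨_, hx⟩
    · exact isWord_head hV
    · rcases hx with _ | ⟨_, hx⟩
      · exact (isWord_head hV).flip
      · cases hx
  | a :: b :: V, hV => by
    rw [cBuild_cons2]
    exact isWord_cAlt (isWord_head hV) _

lemma cBuild_ne_nil : ∀ {V : List ℕ}, V ≠ [] → IsWord V → cBuild V ≠ []
  | [], h, _ => absurd rfl h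
  | [a], _, _ => by rw [cBuild_single]; exact List.cons_ne_nil _ _
  | a :: b :: V, _, hV => by
    rw [cBuild_cons2]
    have hu : cBuild (b :: V) ≠ [] := cBuild_ne_nil (by simp) (isWord_tail hV)
    obtain ⟨n, X, hnx⟩ := List.exists_cons_of_ne_nil (cPad_ne_nil hu)
    rw [hnx]
    exact cAlt_ne_nil (cPad_pos (isWord_cBuild _ (isWord_tail hV)) n
      (hnx ▸ List.mem_cons_self (a := n) (l := X))) X

lemma headI_cBuild : ∀ (V : List ℕ), IsWord V → (cBuild V).headI = V.headI
  | [], _ => rfl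
  | [a], _ => rfl
  | a :: b :: V, hV => by
    rw [cBuild_cons2]
    have hu : cBuild (b :: V) ≠ [] := cBuild_ne_nil (by simp) (isWord_tail hV)
    obtain ⟨n, X, hnx⟩ := List.exists_cons_of_ne_nil (cPad_ne_nil hu)
    rw [hnx, headI_cAlt (cPad_pos (isWord_cBuild _ (isWord_tail hV)) n
      (hnx ▸ List.mem_cons_self (a := n) (l := X)))]
    rfl

@[simp] lemma D_nil : D [] = [] := rfl

lemma D_pair {a : ℕ} (ha : Sig a) : D [a, 3 - a] = [] := by
  rw [D_eq_trim, rle_cons_ne ha.ne_flip, rle_singleton]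
  rfl

lemma D_cBuild : ∀ (V : List ℕ), IsWord V → D (cBuild V) = cBuild V.tail
  | [], _ => rfl
  | [a], hV => by rw [cBuild_single, D_pair (isWord_head hV)]; rfl
  | a :: b :: V, hV => by
    rw [cBuild_cons2,
      D_cAlt_cPad (isWord_head hV) (cBuild_ne_nil (by simp) (isWord_tail hV))
        (isWord_cBuild _ (isWord_tail hV))]
    rfl

lemma isWord_drop {V : List ℕ} (hV : IsWord V) (k : ℕ) : IsWord (V.drop k) :=
  fun x hx => hV x (List.mem_of_mem_drop hx)

lemma D_iter_cBuild {V : List ℕ} (hV : IsWord V) :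
    ∀ i, D^[i] (cBuild V) = cBuild (V.drop i) := by
  intro i
  induction i with
  | zero => rfl
  | succ i ih =>
    rw [Function.iterate_succ_apply', ih, D_cBuild _ (isWord_drop hV i),
      List.tail_drop]

lemma height_eq {w : List ℕ} {n : ℕ} (h1 : D^[n] w = []) (h2 : ∀ m, m < n → D^[m] w ≠ []) :
    height w = n := by
  have hmem : n ∈ {k | D^[k] w = []} := h1
  refine le_antisymm (Nat.sInf_le hmem) ?_
  by_contra hlt
  push_neg at hlt
  exact h2 _ hlt (Nat.sInf_mem ⟨n, hmem⟩)

@[simp] lemma height_nil : height [] = 0 :=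
  height_eq (n := 0) rfl (fun m hm => absurd hm (Nat.not_lt_zero m))

lemma height_cBuild {V : List ℕ} (hV : IsWord V) : height (cBuild V) = V.length := by
  refine height_eq ?_ ?_
  · rw [D_iter_cBuild hV, List.drop_length]; rfl
  · intro m hm
    rw [D_iter_cBuild hV]
    exact cBuild_ne_nil (by rw [← List.length_pos_iff_ne_nil, List.length_drop]; omega)
      (isWord_drop hV m)

lemma height_pos_nonempty {w : List ℕ} (h : 0 < height w) :
    {k | D^[k] w = []}.Nonempty := by
  by_contra hne
  rw [Set.not_nonempty_iff_eq_empty] at hne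
  unfold height at h
  rw [hne, Nat.sInf_empty] at h
  omega

lemma D_iter_height {w : List ℕ} (h : 0 < height w) : D^[height w] w = [] :=
  Nat.sInf_mem (height_pos_nonempty h)

lemma D_iter_ne_nil {w : List ℕ} {m : ℕ} (h : m < height w) : D^[m] w ≠ [] :=
  Nat.notMem_of_lt_sInf h

lemma height_D {w : List ℕ} (h : 0 < height w) : height (D w) = height w - 1 := by
  refine height_eq ?_ ?_
  · have h2 : (height w - 1).succ = height w := by omega
    rw [← Function.iterate_succ_apply, h2]
    exact D_iter_height h
  · intro m hm
    rw [← Function.iterate_succ_apply]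
    exact D_iter_ne_nil (by omega)
/-! ### cBuild is a double-rooted minimal word with left frontier V -/

lemma length_cBuild_cons2 (a b : ℕ) (V : List ℕ) :
    (cBuild (a :: b :: V)).length = (cPad (cBuild (b :: V))).sum := by
  rw [cBuild_cons2, length_cAlt]

lemma minimal_cBuild {V : List ℕ} (hV : IsWord V) (hne : V ≠ []) :
    Minimal (cBuild V) := by
  refine ⟨?_, ?_, ?_⟩
  · intro k
    rw [D_iter_cBuild hV]
    exact isWord_cBuild _ (isWord_drop hV k)
  · rw [height_cBuild hV]
    exact List.length_pos_of_ne_nil hne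
  · intro j hj v hprim
    rw [height_cBuild hV] at hj
    rw [D_iter_cBuild hV] at hprim ⊢
    have hlen : 2 ≤ (V.drop j).length := by rw [List.length_drop]; omega
    obtain ⟨c, L, hL⟩ := List.exists_cons_of_ne_nil
      (by rw [← List.length_pos_iff_ne_nil]; omega : V.drop j ≠ [])
    obtain ⟨d, W, hW⟩ := List.exists_cons_of_ne_nil
      (by rw [← List.length_pos_iff_ne_nil]; rw [hL] at hlen; simp at hlen; omega : L ≠ [])
    have hdropj : V.drop j = c :: d :: W := by rw [hL, hW]
    have hdropj1 : V.drop (j + 1) = d :: W := by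
      rw [← List.tail_drop, hdropj]; rfl
    rw [hdropj1] at hprim
    rw [hdropj, length_cBuild_cons2]
    have hwd : IsWord (d :: W) := by
      rw [← hdropj1]; exact isWord_drop hV (j + 1)
    have hu : cBuild (d :: W) ≠ [] := cBuild_ne_nil (by simp) hwd
    calc (cPad (cBuild (d :: W))).sum ≤ (rle v).sum := (rle_of_D hu hprim.2).1
      _ = v.length := sum_rle v

lemma drmin_cBuild {V : List ℕ} (hV : IsWord V) (hne : V ≠ []) :
    DRMin (cBuild V) := by
  refine ⟨minimal_cBuild hV hne, ?_⟩
  unfold root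
  rw [height_cBuild hV, D_iter_cBuild hV]
  obtain ⟨x, hx⟩ := List.length_eq_one_iff.mp
    (by rw [List.length_drop]; have := List.length_pos_of_ne_nil hne; omega :
      (V.drop (V.length - 1)).length = 1)
  rw [hx, cBuild_single]
  rfl

/-! ### psi computations -/

lemma getD_zero_headI (l : List ℕ) : l.getD 0 0 = l.headI := by cases l <;> rfl

@[simp] lemma psi_nil : psi [] = [] := by
  unfold psi
  rw [height_nil]
  rfl

lemma psi_length (w : List ℕ) : (psi w).length = height w := by
  unfold psi
  rw [List.length_map, List.length_range]

lemma psi_cons {w : List ℕ} (hh : 0 < height w)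
    (hz : ¬((D w).getD 0 0 = 2 ∧ w.getD 0 0 ≠ w.getD 1 0)) :
    psi w = w.getD 0 0 :: psi (D w) := by
  unfold psi
  rw [height_D hh]
  obtain ⟨k, hk⟩ : ∃ k, height w = k + 1 := ⟨height w - 1, by omega⟩
  rw [hk]
  simp only [Nat.add_sub_cancel]
  rw [List.range_succ_eq_map, List.map_cons, List.map_map]
  congr 1
  refine List.map_congr_left ?_
  intro i _
  simp only [Function.comp_apply]
  cases i with
  | zero =>
    simp only [Nat.succ_ne_zero, if_false, Nat.succ_sub_one, Function.iterate_one,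
      Function.iterate_zero, id_eq, if_neg hz, reduceIte]
  | succ j =>
    simp only [Nat.succ_ne_zero, if_false, Nat.succ_sub_one,
      Function.iterate_succ_apply, reduceIte]
    rfl

lemma psi_cBuild : ∀ (V : List ℕ), IsWord V → V ≠ [] → psi (cBuild V) = V
  | [], _, hne => absurd rfl hne
  | [a], hV, _ => by
    have hh : 0 < height (cBuild [a]) := by rw [height_cBuild hV]; simp
    rw [psi_cons hh ?_]
    · rw [D_cBuild _ hV]
      simp only [List.tail_cons, cBuild_nil, psi_nil]
      rw [cBuild_single, getD_zero_headI]
      rfl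
    · rw [D_cBuild _ hV]
      simp only [List.tail_cons, cBuild_nil]
      intro hcon
      simp [List.getD] at hcon
  | a :: b :: V, hV, _ => by
    have hwd : IsWord (b :: V) := isWord_tail hV
    have hh : 0 < height (cBuild (a :: b :: V)) := by
      rw [height_cBuild hV]; simp
    have hDw : D (cBuild (a :: b :: V)) = cBuild (b :: V) := by
      rw [D_cBuild _ hV]; rfl
    rw [psi_cons hh ?_]
    · rw [hDw, psi_cBuild (b :: V) hwd (by simp), getD_zero_headI,
        headI_cBuild _ hV]
      rfl
    · rw [hDw, getD_zero_headI, headI_cBuild _ hwd]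
      simp only [List.headI_cons]
      by_cases hb : b = 2
      · subst hb
        intro hcon
        -- first two letters of cBuild (a :: 2 :: V) agree
        have hu : cBuild (2 :: V) ≠ [] := cBuild_ne_nil (by simp) hwd
        have hhead2 : (cPad (cBuild (2 :: V))).headI = 2 := by
          rw [headI_cPad hu, headI_cBuild _ hwd]
          rfl
        obtain ⟨n, X, hnx⟩ := List.exists_cons_of_ne_nil (cPad_ne_nil hu)
        have hn2 : n = 2 := by rw [hnx] at hhead2; exact hhead2
        subst hn2
        rw [cBuild_cons2, hnx, cAlt_cons] at hcon
        simp [List.replicate] at hcon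
      · intro hcon
        exact hb hcon.1
/-! ### Uniqueness: every double-rooted minimal word is built from its frontier -/

lemma no_zero_cond {a : ℕ} {u : List ℕ} (hu : u ≠ []) (hword : IsWord u) {w : List ℕ}
    (hw : w = cAlt a (cPad u)) :
    ¬(u.getD 0 0 = 2 ∧ w.getD 0 0 ≠ w.getD 1 0) := by
  intro hcon
  have hhead2 : (cPad u).headI = 2 := by
    rw [headI_cPad hu, ← getD_zero_headI, hcon.1]
  obtain ⟨n, X, hnx⟩ := List.exists_cons_of_ne_nil (cPad_ne_nil hu)
  have hn2 : n = 2 := by rw [hnx] at hhead2; exact hhead2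
  subst hn2
  rw [hw, hnx, cAlt_cons] at hcon
  simp [List.replicate] at hcon

lemma minimal_eq_cAlt {w : List ℕ} (h : Minimal w) (h2 : 2 ≤ height w) :
    w = cAlt w.headI (cPad (D w)) := by
  have hword : IsWord w := by simpa using h.1 0
  have hw0 : w ≠ [] := by
    have := D_iter_ne_nil (w := w) (m := 0) (by omega)
    simpa using this
  have hDw_word : IsWord (D w) := by simpa using h.1 1
  have hDw_ne : D w ≠ [] := by
    have := D_iter_ne_nil (w := w) (m := 1) (by omega)
    simpa using this
  have ha : Sig w.headI := by
    obtain ⟨x, t, rfl⟩ := List.exists_cons_of_ne_nil hw0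
    exact isWord_head hword
  have hprim : Primitive (cAlt w.headI (cPad (D w))) (D w) :=
    ⟨isWord_cAlt ha _, D_cAlt_cPad ha hDw_ne hDw_word⟩
  have hmin := h.2.2 0 (by omega) _ hprim
  simp only [Function.iterate_one, Function.iterate_zero, id_eq] at hmin
  rw [length_cAlt] at hmin
  have hle : (rle w).sum ≤ (cPad (D w)).sum := by rw [sum_rle]; exact hmin
  have hrle : rle w = cPad (D w) := (rle_of_D hDw_ne rfl).2 hle
  conv_lhs => rw [← word_eq_cAlt w hword]
  rw [hrle]

lemma minimal_D {w : List ℕ} (h : Minimal w) (h2 : 2 ≤ height w) : Minimal (D w) := by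
  refine ⟨?_, ?_, ?_⟩
  · intro k
    have := h.1 (k + 1)
    rwa [Function.iterate_succ_apply] at this
  · rw [height_D (by omega)]; omega
  · intro j hj v hp
    rw [height_D (by omega)] at hj
    have hp' : Primitive v (D^[j + 1 + 1] w) := by
      rwa [Function.iterate_succ_apply]
    have := h.2.2 (j + 1) (by omega) v hp'
    rwa [Function.iterate_succ_apply] at this

lemma root_D {w : List ℕ} (h2 : 2 ≤ height w) : root (D w) = root w := by
  unfold root
  rw [height_D (by omega)]
  have harith : (height w - 1 - 1).succ = height w - 1 := by omega
  rw [← Function.iterate_succ_apply, harith]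

lemma D_double {x : ℕ} : D [x, x] = [2] := by
  have : rle [x, x] = [2] := rle_cons_eq (rle_singleton x)
  rw [D_eq_trim, this]
  rfl

lemma drmin_eq_cBuild : ∀ (n : ℕ) (w : List ℕ), height w = n → DRMin w →
    IsWord (psi w) ∧ psi w ≠ [] ∧ cBuild (psi w) = w := by
  intro n
  induction n using Nat.strong_induction_on with
  | _ n ih =>
    intro w hn hw
    have hpos : 0 < height w := hw.1.2.1
    have hword : IsWord w := by simpa using hw.1.1 0
    have hw0 : w ≠ [] := by
      have := D_iter_ne_nil (w := w) (m := 0) hpos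
      simpa using this
    by_cases h1 : height w = 1
    · -- base case : w = [x, 3-x]
      have hlen : w.length = 2 := by
        have hr := hw.2
        unfold root at hr
        rw [h1] at hr
        simpa using hr
      obtain ⟨x, y, rfl⟩ := List.length_eq_two.mp hlen
      have hx : Sig x := isWord_head hword
      have hy : Sig y := isWord_head (isWord_tail hword)
      have hD1 : D [x, y] = [] := by
        have := D_iter_height hpos
        rw [h1] at this
        simpa using this
      have hxy : y ≠ x := by
        intro hyx
        subst hyx
        rw [D_double] at hD1
        exact List.cons_ne_nil _ _ hD1
      have hy3 : y = 3 - x := Sig.eq_flip_of_ne hx hy hxy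
      subst hy3
      have hpsi : psi [x, 3 - x] = [x] := by
        rw [psi_cons hpos (by rw [hD1]; intro hc; simp [List.getD] at hc), hD1, psi_nil]
        rfl
      rw [hpsi]
      refine ⟨?_, by simp, ?_⟩
      · intro z hz
        rcases hz with _ | ⟨_, hz⟩
        · exact hx
        · cases hz
      · rw [cBuild_single]
    · have h2 : 2 ≤ height w := by omega
      have hDmin : Minimal (D w) := minimal_D hw.1 h2
      have hDroot : (root (D w)).length = 2 := by rw [root_D h2]; exact hw.2
      have hDheight : height (D w) = n - 1 := by rw [height_D hpos, hn]
      obtain ⟨hpsiD_word, hpsiD_ne, hbuildD⟩ :=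
        ih (n - 1) (by omega) (D w) hDheight ⟨hDmin, hDroot⟩
      have heq : w = cAlt w.headI (cPad (D w)) := minimal_eq_cAlt hw.1 h2
      have hDw_word : IsWord (D w) := by simpa using hw.1.1 1
      have hDw_ne : D w ≠ [] := by
        have := D_iter_ne_nil (w := w) (m := 1) (by omega)
        simpa using this
      have hz : ¬((D w).getD 0 0 = 2 ∧ w.getD 0 0 ≠ w.getD 1 0) :=
        no_zero_cond hDw_ne hDw_word heq
      have hpsi : psi w = w.headI :: psi (D w) := by
        rw [psi_cons hpos hz, getD_zero_headI]
      have ha : Sig w.headI := by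
        obtain ⟨c, t, rfl⟩ := List.exists_cons_of_ne_nil hw0
        exact isWord_head hword
      refine ⟨?_, ?_, ?_⟩
      · rw [hpsi]
        intro z hz'
        rcases hz' with _ | ⟨_, hz'⟩
        · exact ha
        · exact hpsiD_word z hz'
      · rw [hpsi]; simp
      · rw [hpsi]
        obtain ⟨c, V', hV'⟩ := List.exists_cons_of_ne_nil hpsiD_ne
        rw [hV', cBuild_cons2, ← hV', hbuildD, ← heq]

lemma drmOf_eq {U : List ℕ} (hU : IsWord U) (hne : U ≠ []) : drmOf U = cBuild U := by
  unfold drmOf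
  have hex : ∃ w, DRMin w ∧ psi w = U :=
    ⟨cBuild U, drmin_cBuild hU hne, psi_cBuild U hU hne⟩
  rw [dif_pos hex]
  obtain ⟨hw, hpsi⟩ := hex.choose_spec
  have h3 := (drmin_eq_cBuild (height hex.choose) hex.choose rfl hw).2.2
  rw [hpsi] at h3
  exact h3.symm
/-! ### Reversals -/

lemma cAlt_reverse {a : ℕ} (ha : Sig a) : ∀ X : List ℕ,
    (cAlt a X).reverse = cAlt (if X.length % 2 = 1 then a else 3 - a) X.reverse := by
  intro X
  induction X generalizing a with
  | nil => simp
  | cons n X ih =>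
    rw [cAlt_cons, List.reverse_append, List.reverse_replicate, ih ha.flip]
    have hrev : (n :: X).reverse = X.reverse ++ [n] := by simp
    rw [hrev]
    have hlen : X.reverse.length = X.length := List.length_reverse
    by_cases hpar : X.length % 2 = 1
    · have h0 : ¬((n :: X).length % 2 = 1) := by rw [List.length_cons]; omega
      rw [if_pos hpar, if_neg h0, cAlt_append ha.flip]
      have hnl : nl (3 - a) X.reverse = a := by
        unfold nl
        rw [hlen, if_neg (by omega)]
        exact ha.flip_flip
      rw [hnl, cAlt_cons]
      simp
    · have h0 : (n :: X).length % 2 = 1 := by rw [List.length_cons]; omega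
      rw [if_neg hpar, if_pos h0, ha.flip_flip, cAlt_append ha]
      have hnl : nl a X.reverse = a := by
        unfold nl
        rw [hlen, if_pos (by omega)]
      rw [hnl, cAlt_cons]
      simp

lemma cPad_reverse {u : List ℕ} (hu : u ≠ []) : (cPad u).reverse = cPad u.reverse := by
  unfold cPad
  rw [headI_reverse, getLastD_reverse]
  by_cases h1 : u.headI = 1 <;> by_cases h2 : u.getLastD 0 = 1 <;>
    simp [h1, h2, List.reverse_append] <;> split <;> rfl

lemma isWord_reverse {u : List ℕ} (hu : IsWord u) : IsWord u.reverse :=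
  fun x hx => hu x (List.mem_reverse.mp hx)

lemma reverse_cBuild_cons2 {a b : ℕ} {V : List ℕ} (hV : IsWord (a :: b :: V)) :
    ∃ a', Sig a' ∧
      (cBuild (a :: b :: V)).reverse = cAlt a' (cPad ((cBuild (b :: V)).reverse)) := by
  have hu : cBuild (b :: V) ≠ [] := cBuild_ne_nil (by simp) (isWord_tail hV)
  refine ⟨if (cPad (cBuild (b :: V))).length % 2 = 1 then a else 3 - a, ?_, ?_⟩
  · split
    · exact isWord_head hV
    · exact (isWord_head hV).flip
  · rw [cBuild_cons2, cAlt_reverse (isWord_head hV), cPad_reverse hu]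

lemma D_reverse_cBuild : ∀ (V : List ℕ), IsWord V →
    D ((cBuild V).reverse) = (cBuild V.tail).reverse
  | [], _ => rfl
  | [a], hV => by
    have ha : Sig a := isWord_head hV
    have : (cBuild [a]).reverse = [3 - a, 3 - (3 - a)] := by
      rw [cBuild_single, ha.flip_flip]
      rfl
    rw [this, D_pair ha.flip]
    rfl
  | a :: b :: V, hV => by
    obtain ⟨a', ha', heq⟩ := reverse_cBuild_cons2 hV
    have hu : cBuild (b :: V) ≠ [] := cBuild_ne_nil (by simp) (isWord_tail hV)
    rw [heq, D_cAlt_cPad ha' (by simpa using hu)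
      (isWord_reverse (isWord_cBuild _ (isWord_tail hV)))]
    rfl

lemma D_iter_reverse_cBuild {V : List ℕ} (hV : IsWord V) :
    ∀ i, D^[i] ((cBuild V).reverse) = (cBuild (V.drop i)).reverse := by
  intro i
  induction i with
  | zero => rfl
  | succ i ih =>
    rw [Function.iterate_succ_apply', ih, D_reverse_cBuild _ (isWord_drop hV i),
      List.tail_drop]

lemma height_reverse_cBuild {V : List ℕ} (hV : IsWord V) :
    height ((cBuild V).reverse) = V.length := by
  refine height_eq ?_ ?_
  · rw [D_iter_reverse_cBuild hV, List.drop_length]; rfl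
  · intro m hm
    rw [D_iter_reverse_cBuild hV]
    simpa using cBuild_ne_nil
      (by rw [← List.length_pos_iff_ne_nil, List.length_drop]; omega)
      (isWord_drop hV m)

lemma psi_reverse_single (a : ℕ) (ha : Sig a) :
    psi ((cBuild [a]).reverse) = [3 - a] := by
  have hrev : (cBuild [a]).reverse = [3 - a, 3 - (3 - a)] := by
    rw [cBuild_single, ha.flip_flip]
    rfl
  have hpos : 0 < height ((cBuild [a]).reverse) := by
    rw [height_reverse_cBuild (fun x hx => by rcases hx with _ | ⟨_, hx⟩; exact ha; cases hx)]
    simp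
  have hD : D ((cBuild [a]).reverse) = [] := by
    rw [hrev, D_pair ha.flip]
  rw [psi_cons hpos (by rw [hD]; intro hc; simp [List.getD] at hc), hD, psi_nil, hrev]
  rfl

lemma psi_reverse_step {a b : ℕ} {V : List ℕ} (hV : IsWord (a :: b :: V)) :
    psi ((cBuild (a :: b :: V)).reverse)
      = (cBuild (a :: b :: V)).getLastD 0 :: psi ((cBuild (b :: V)).reverse) := by
  obtain ⟨a', ha', heq⟩ := reverse_cBuild_cons2 hV
  have hu : cBuild (b :: V) ≠ [] := cBuild_ne_nil (by simp) (isWord_tail hV)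
  have hurev : (cBuild (b :: V)).reverse ≠ [] := by simpa using hu
  have huword : IsWord ((cBuild (b :: V)).reverse) :=
    isWord_reverse (isWord_cBuild _ (isWord_tail hV))
  have hpos : 0 < height ((cBuild (a :: b :: V)).reverse) := by
    rw [height_reverse_cBuild hV]; simp
  have hDy : D ((cBuild (a :: b :: V)).reverse) = (cBuild (b :: V)).reverse := by
    rw [D_reverse_cBuild _ hV]; rfl
  have hz : ¬((D ((cBuild (a :: b :: V)).reverse)).getD 0 0 = 2 ∧
      ((cBuild (a :: b :: V)).reverse).getD 0 0 ≠ ((cBuild (a :: b :: V)).reverse).getD 1 0) := by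
    rw [hDy]
    exact no_zero_cond hurev huword heq
  rw [psi_cons hpos hz, hDy, getD_zero_headI, headI_reverse]
/-! ### Complementation -/

@[simp] lemma compl_nil : compl [] = [] := rfl
lemma compl_cons (a : ℕ) (V : List ℕ) : compl (a :: V) = (3 - a) :: compl V := rfl

lemma isWord_compl {V : List ℕ} (hV : IsWord V) : IsWord (compl V) := by
  intro x hx
  unfold compl at hx
  rw [List.mem_map] at hx
  obtain ⟨y, hy, rfl⟩ := hx
  rcases hV y hy with rfl | rfl
  · exact Or.inr rfl
  · exact Or.inl rfl

lemma getLastD_cons_append (c d : ℕ) (M : List ℕ) :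
    (c :: (M ++ [d])).getLastD 0 = d := by
  rw [List.getLastD_cons, List.getLastD_concat]

lemma getLast?_cons_append (c d : ℕ) (M : List ℕ) :
    (c :: (M ++ [d])).getLast? = some d := by
  rw [← List.cons_append, List.getLast?_concat]

lemma cAlt_pair (e : ℕ) : cAlt e [1, 1] = [e, 3 - e] := rfl
lemma cAlt_two (e : ℕ) : cAlt e [2] = [e, e] := rfl

/-- The master identity: `cBuild (compl V)` is `cBuild V` with both end letters
complemented. -/
lemma build_compl : ∀ (V : List ℕ), IsWord V → V ≠ [] →
    ∃ (M : List ℕ) (c d : ℕ), Sig c ∧ Sig d ∧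
      cBuild V = c :: (M ++ [d]) ∧ cBuild (compl V) = (3 - c) :: (M ++ [3 - d])
  | [], _, hne => absurd rfl hne
  | [a], hV, _ => by
    have ha := isWord_head hV
    refine ⟨[], a, 3 - a, ha, ha.flip, ?_, ?_⟩
    · rw [cBuild_single]; rfl
    · rw [compl_cons, compl_nil, cBuild_single, ha.flip_flip]
      simp
  | a :: b :: V, hV, _ => by
    obtain ⟨M, c, d, hc, hd, hu, hu'⟩ := build_compl (b :: V) (isWord_tail hV) (by simp)
    have ha := isWord_head hV
    have hcompl2 : compl (a :: b :: V) = (3 - a) :: (3 - b) :: compl V := rfl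
    have hcb' : cBuild (compl (a :: b :: V))
        = cAlt (3 - a) (cPad (cBuild (compl (b :: V)))) := by
      rw [hcompl2, cBuild_cons2]
      rfl
    rcases hc with rfl | rfl <;> rcases hd with rfl | rfl
    · -- c = 1, d = 1
      set e := nl a M with he_def
      have he : Sig e := ha.nl M
      have hpadu : cPad (cBuild (b :: V)) = 1 :: 1 :: (M ++ [1, 1]) := by
        unfold cPad
        rw [hu]
        norm_num [getLast?_cons_append]
      have hpadu' : cPad (cBuild (compl (b :: V))) = 2 :: (M ++ [2]) := by
        unfold cPad
        rw [hu']
        norm_num [getLast?_cons_append]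
      refine ⟨(3 - a) :: (cAlt a M ++ [e]), a, 3 - e, ha, he.flip, ?_, ?_⟩
      · rw [cBuild_cons2, hpadu, cAlt_cons, cAlt_cons, ha.flip_flip,
          cAlt_append ha, cAlt_pair]
        simp [he_def]
      · rw [hcb', hpadu', cAlt_cons, ha.flip_flip, cAlt_append ha, cAlt_two,
          he.flip_flip]
        simp [List.replicate, he_def]
    · -- c = 1, d = 2
      set e := nl a M with he_def
      have he : Sig e := ha.nl M
      have hpadu : cPad (cBuild (b :: V)) = 1 :: 1 :: (M ++ [2]) := by
        unfold cPad
        rw [hu]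
        norm_num [getLast?_cons_append]
      have hpadu' : cPad (cBuild (compl (b :: V))) = 2 :: (M ++ [1, 1]) := by
        unfold cPad
        rw [hu']
        norm_num [getLast?_cons_append]
      refine ⟨(3 - a) :: (cAlt a M ++ [e]), a, e, ha, he, ?_, ?_⟩
      · rw [cBuild_cons2, hpadu, cAlt_cons, cAlt_cons, ha.flip_flip,
          cAlt_append ha, cAlt_two]
        simp [he_def]
      · rw [hcb', hpadu', cAlt_cons, ha.flip_flip, cAlt_append ha, cAlt_pair]
        simp [List.replicate, he_def]
    · -- c = 2, d = 1
      set f := nl (3 - a) M with hf_def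
      have hf : Sig f := ha.flip.nl M
      have hpadu : cPad (cBuild (b :: V)) = 2 :: (M ++ [1, 1]) := by
        unfold cPad
        rw [hu]
        norm_num [getLast?_cons_append]
      have hpadu' : cPad (cBuild (compl (b :: V))) = 1 :: 1 :: (M ++ [2]) := by
        unfold cPad
        rw [hu']
        norm_num [getLast?_cons_append]
      refine ⟨a :: (cAlt (3 - a) M ++ [f]), a, 3 - f, ha, hf.flip, ?_, ?_⟩
      · rw [cBuild_cons2, hpadu, cAlt_cons, cAlt_append ha.flip, cAlt_pair]
        simp [List.replicate, hf_def]
      · rw [hcb', hpadu', cAlt_cons, cAlt_cons, ha.flip_flip, cAlt_append ha.flip,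
          cAlt_two, hf.flip_flip]
        simp [hf_def]
    · -- c = 2, d = 2
      set f := nl (3 - a) M with hf_def
      have hf : Sig f := ha.flip.nl M
      have hpadu : cPad (cBuild (b :: V)) = 2 :: (M ++ [2]) := by
        unfold cPad
        rw [hu]
        norm_num [getLast?_cons_append]
      have hpadu' : cPad (cBuild (compl (b :: V))) = 1 :: 1 :: (M ++ [1, 1]) := by
        unfold cPad
        rw [hu']
        norm_num [getLast?_cons_append]
      refine ⟨a :: (cAlt (3 - a) M ++ [f]), a, f, ha, hf, ?_, ?_⟩
      · rw [cBuild_cons2, hpadu, cAlt_cons, cAlt_append ha.flip, cAlt_two]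
        simp [List.replicate, hf_def]
      · rw [hcb', hpadu', cAlt_cons, cAlt_cons, ha.flip_flip, cAlt_append ha.flip,
          cAlt_pair]
        simp [hf_def]
/-! ### Final assembly -/

lemma psi_rev_compl : ∀ (V : List ℕ), IsWord V →
    psi ((cBuild (compl V)).reverse) = compl (psi ((cBuild V).reverse))
  | [], _ => by simp
  | [a], hV => by
    have ha := isWord_head hV
    rw [compl_cons, compl_nil, psi_reverse_single a ha,
      psi_reverse_single (3 - a) ha.flip, ha.flip_flip, compl_cons, compl_nil,
      ha.flip_flip]
  | a :: b :: V, hV => by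
    have hW : IsWord ((3 - a) :: (3 - b) :: compl V) := by
      have := isWord_compl hV
      rwa [compl_cons, compl_cons] at this
    have hcompl2 : compl (a :: b :: V) = (3 - a) :: (3 - b) :: compl V := rfl
    have hcomplt : compl (b :: V) = (3 - b) :: compl V := rfl
    obtain ⟨M, c, d, _, hd, hbu, hbu'⟩ := build_compl (a :: b :: V) hV (by simp)
    have hlast : (cBuild (a :: b :: V)).getLastD 0 = d := by
      rw [hbu, getLastD_cons_append]
    have hlast' : (cBuild ((3 - a) :: (3 - b) :: compl V)).getLastD 0 = 3 - d := by
      rw [← hcompl2, hbu', getLastD_cons_append]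
    rw [hcompl2, psi_reverse_step hW, psi_reverse_step hV, hlast', hlast,
      ← hcomplt, psi_rev_compl (b :: V) (isWord_tail hV), compl_cons]

theorem gammad_compl' (U : List ℕ) (hU : IsWord U) :
    compl (Gd U) = Gd (compl U) := by
  rcases eq_or_ne U [] with rfl | hne
  · have hno : ¬∃ w, DRMin w ∧ psi w = [] := by
      rintro ⟨w, hw, hpsi⟩
      have hlen := psi_length w
      rw [hpsi] at hlen
      have hpos : 0 < height w := hw.1.2.1
      simp at hlen
      omega
    unfold Gd drmOf
    rw [compl_nil, dif_neg hno]
    simp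
  · have hne' : compl U ≠ [] := by
      intro h
      exact hne (List.map_eq_nil_iff.mp h)
    unfold Gd
    rw [drmOf_eq hU hne, drmOf_eq (isWord_compl hU) hne']
    exact (psi_rev_compl U hU).symm

/-- Γd commutes with complementation. -/
theorem gammad_compl (U : List ℕ) (hU : IsWord U) :
    compl (Gd U) = Gd (compl U) := by
  exact gammad_compl' U hU

end CInfWords
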